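/- arXiv:0809.3420 — 3 statements merged into one kernel-verified Lean document; each statement's English description precedes it below -/
import Mathlib

section
/- Let H be a group generated by finitely many elements of finite order, and suppose the center Z(H) has finite index in H. Then H is finite. -/
open scoped commutatorElement

lemma aux_comm_right {H : Type*} [Group H] (a b z : H) (hz : z ∈ Subgroup.center H) :
    ⁅a * z, b⁆ = ⁅a, b⁆ := by
  have hzc := Subgroup.mem_center_iff.mp hz
  simp only [commutatorElement_def, mul_inv_rev]
  have h1 : z * b = b * z := (hzc b).symm
  calc a * z * b * (z⁻¹ * a⁻¹) * b⁻¹ = a * (z * b) * z⁻¹ * a⁻¹ * b⁻¹ := by group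
    _ = a * (b * z) * z⁻¹ * a⁻¹ * b⁻¹ := by rw [h1]
    _ = a * b * a⁻¹ * b⁻¹ := by group

lemma aux_comm_left {H : Type*} [Group H] (a b z : H) (hz : z ∈ Subgroup.center H) :
    ⁅a, b * z⁆ = ⁅a, b⁆ := by
  have hzc := Subgroup.mem_center_iff.mp hz
  simp only [commutatorElement_def, mul_inv_rev]
  have h1 : ∀ c : H, z * c = c * z := fun c => (hzc c).symm
  calc a * (b * z) * a⁻¹ * (z⁻¹ * b⁻¹) = a * b * (z * a⁻¹) * z⁻¹ * b⁻¹ := by group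
    _ = a * b * (a⁻¹ * z) * z⁻¹ * b⁻¹ := by rw [h1]
    _ = a * b * a⁻¹ * b⁻¹ := by group

lemma aux_finite_commutatorSet (H : Type*) [Group H]
    (hZ : (Subgroup.center H).FiniteIndex) : Finite (commutatorSet H) := by
  haveI := hZ
  haveI : Finite (H ⧸ Subgroup.center H) := Subgroup.finite_quotient_of_finiteIndex
  set Z := Subgroup.center H
  let f : (H ⧸ Z) × (H ⧸ Z) → H := fun p => ⁅Quotient.out p.1, Quotient.out p.2⁆
  have hsub : commutatorSet H ⊆ Set.range f := by
    rintro x ⟨g₁, g₂, rfl⟩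
    refine ⟨(QuotientGroup.mk g₁, QuotientGroup.mk g₂), ?_⟩
    obtain ⟨z₁, he₁⟩ := QuotientGroup.mk_out_eq_mul Z g₁
    obtain ⟨z₂, he₂⟩ := QuotientGroup.mk_out_eq_mul Z g₂
    simp only [f, he₁, he₂]
    rw [aux_comm_right _ _ _ z₁.2, aux_comm_left _ _ _ z₂.2]
  exact Set.Finite.subset ((Set.finite_range f)) hsub

/-- A group generated by finitely many elements of finite order whose center
has finite index is finite. -/
theorem stmt_0 (H : Type*) [Group H] (S : Finset H)
    (hgen : Subgroup.closure (S : Set H) = ⊤)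
    (hord : ∀ s ∈ S, IsOfFinOrder s)
    (hZ : (Subgroup.center H).FiniteIndex) :
    Finite H := by
  haveI : Finite (commutatorSet H) := aux_finite_commutatorSet H hZ
  haveI hfc : Finite (commutator H) := inferInstance
  haveI hFG : Group.FG H := Group.fg_iff.mpr ⟨(S : Set H), hgen, S.finite_toSet⟩
  -- Abelianization is finitely generated and torsion, hence finite
  have hsurj : Function.Surjective (Abelianization.of (G := H)) :=
    QuotientGroup.mk_surjective
  haveI : Group.FG (Abelianization H) := Group.fg_of_surjective hsurj
  have htor : Monoid.IsTorsion (Abelianization H) := by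
    intro x
    have hx : x ∈ CommGroup.torsion (Abelianization H) := by
      have hle : Subgroup.closure (Abelianization.of '' (S : Set H)) ≤
          CommGroup.torsion (Abelianization H) := by
        apply Subgroup.closure_le _ |>.mpr
        rintro _ ⟨s, hs, rfl⟩
        exact Abelianization.of.isOfFinOrder (hord s hs)
      have htop : Subgroup.closure (Abelianization.of '' (S : Set H)) = ⊤ := by
        rw [← MonoidHom.map_closure, hgen, ← MonoidHom.range_eq_map,
          MonoidHom.range_eq_top_of_surjective _ hsurj]
      rw [htop] at hle
      exact hle (Subgroup.mem_top x)
    exact hx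
  haveI : Finite (Abelianization H) := CommGroup.finite_of_fg_torsion _ htor
  haveI : Finite (H ⧸ commutator H) := ‹Finite (Abelianization H)›
  exact Finite.of_equiv _ (Subgroup.groupEquivQuotientProdSubgroup (s := commutator H)).symm
end

section
/- Suppose integers 2 ≤ m₁, ..., m_r with r ≥ 3 satisfy Θ := -2 + Σᵢ(1 - 1/m_i) > 0, α := (8-t)/(4Θ) is a positive integer for some t ∈ {2,4,6}, and each m_i divides 2α. Then max_i m_i ≤ 3(10 - t). -/
/-- If `m₁, …, m_r ≥ 2` (`r ≥ 3`) satisfy `Θ = -2 + Σ(1 - 1/mᵢ) > 0`,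
`α = (8-t)/(4Θ)` is a positive integer for some `t ∈ {2,4,6}`, and each `mᵢ`
divides `2α`, then every `mᵢ` is at most `3(10-t)`. -/
theorem stmt_4 (r : ℕ) (hr : 3 ≤ r) (m : Fin r → ℕ) (hm : ∀ i, 2 ≤ m i)
    (Θ : ℚ) (hΘ : Θ = -2 + ∑ i, (1 - 1 / (m i : ℚ))) (hΘpos : 0 < Θ)
    (t : ℕ) (ht : t = 2 ∨ t = 4 ∨ t = 6)
    (α : ℕ) (hα : 1 ≤ α) (hαdef : (α : ℚ) = (8 - (t : ℚ)) / (4 * Θ))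
    (hdvd : ∀ i, m i ∣ 2 * α) :
    ∀ i, m i ≤ 3 * (10 - t) := by
  intro i
  have hα1 : (1:ℚ) ≤ α := by exact_mod_cast hα
  set s : ℚ := 4 - (t:ℚ)/2 with hsdef
  have hs1 : (1:ℚ) ≤ s := by rcases ht with h|h|h <;> subst h <;> norm_num [hsdef]
  have hM : Θ * (2*α) = s := by
    have h4 : (4*Θ) ≠ 0 := by positivity
    field_simp at hαdef
    linear_combination hαdef/2
  obtain ⟨d, hd⟩ := hdvd i
  have hmipos : (0:ℚ) < m i := by
    have := hm i
    have : (2:ℚ) ≤ m i := by exact_mod_cast this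
    linarith
  have hd1 : 1 ≤ d := by
    rcases Nat.eq_zero_or_pos d with h|h
    · subst h; omega
    · exact h
  have hd1q : (1:ℚ) ≤ d := by exact_mod_cast hd1
  have hdq : (m i : ℚ) * d = 2*α := by exact_mod_cast hd.symm
  set S : ℚ := ∑ k ∈ Finset.univ.erase i, (1 - 1/(m k : ℚ)) with hSdef
  have hsplit : S + (1 - 1/(m i:ℚ)) = ∑ k, (1 - 1/(m k:ℚ)) :=
    Finset.sum_erase_add _ _ (Finset.mem_univ i)
  have hkey : (d:ℚ) + s = 2*α*(S - 1) := by
    have h1 : (1:ℚ)/(m i) * (2*α) = d := by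
      field_simp
      linarith [hdq]
    rw [hΘ, ← hsplit] at hM
    linear_combination (-1 : ℚ) * hM - h1
  have half_le : ∀ k : Fin r, (1:ℚ)/2 ≤ 1 - 1/(m k) := by
    intro k
    have h2 : (2:ℚ) ≤ m k := by exact_mod_cast hm k
    have : (1:ℚ)/(m k) ≤ 1/2 := by
      apply one_div_le_one_div_of_le <;> linarith
    linarith
  have hcard : (Finset.univ.erase i).card = r - 1 := by
    rw [Finset.card_erase_of_mem (Finset.mem_univ i)]
    simp
  have hr3 : (3:ℚ) ≤ r := by exact_mod_cast hr
  have hS : 7/6 ≤ S := by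
    by_cases hex : ∃ k ∈ Finset.univ.erase i, 3 ≤ m k
    · obtain ⟨k, hk, h3⟩ := hex
      have h23 : (2:ℚ)/3 ≤ 1 - 1/(m k) := by
        have h3q : (3:ℚ) ≤ m k := by exact_mod_cast h3
        have : (1:ℚ)/(m k) ≤ 1/3 := by
          apply one_div_le_one_div_of_le <;> linarith
        linarith
      have hsplit2 : (∑ j ∈ (Finset.univ.erase i).erase k, (1 - 1/(m j:ℚ)))
          + (1 - 1/(m k:ℚ)) = S := Finset.sum_erase_add _ _ hk
      have hcard2 : ((Finset.univ.erase i).erase k).card = r - 2 := by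
        rw [Finset.card_erase_of_mem hk, hcard]
        omega
      have hrest : ((r:ℚ) - 2) * (1/2)
          ≤ ∑ j ∈ (Finset.univ.erase i).erase k, (1 - 1/(m j:ℚ)) := by
        have h := Finset.card_nsmul_le_sum ((Finset.univ.erase i).erase k) _ ((1:ℚ)/2)
          (fun x _ => half_le x)
        rw [hcard2] at h
        have hcast : ((r - 2 : ℕ) : ℚ) = (r:ℚ) - 2 := by
          have h2 : (2:ℕ) ≤ r := by omega
          push_cast [Nat.cast_sub h2]
          ring
        rw [nsmul_eq_mul, hcast] at h
        exact h
      nlinarith [hrest]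
    · push_neg at hex
      have hall : ∀ k ∈ Finset.univ.erase i, (1 - 1/(m k:ℚ)) = 1/2 := by
        intro k hk
        have h1 := hm k
        have h2 := hex k hk
        have : m k = 2 := by omega
        rw [this]; norm_num
      have hSval : S = ((r:ℚ) - 1) * (1/2) := by
        rw [hSdef, Finset.sum_congr rfl hall, Finset.sum_const, hcard]
        have h1 : (1:ℕ) ≤ r := by omega
        rw [nsmul_eq_mul]
        push_cast [Nat.cast_sub h1]
        ring
      rcases Nat.lt_or_ge r 4 with h4 | h4
      · exfalso
        have hre : r = 3 := by omega
        have hS1 : S = 1 := by rw [hSval, hre]; norm_num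
        rw [hS1] at hkey
        norm_num at hkey
        linarith [hkey, hd1q, hs1]
      · have h4q : (4:ℚ) ≤ r := by exact_mod_cast h4
        rw [hSval]; linarith
  -- Now: d + s = 2α(S-1) ≥ 2α/6, so 2α ≤ 6(d+s); m i · d = 2α ≤ 6d+6s ≤ (6+6s)d
  have hMle : 2*(α:ℚ) ≤ 6*((d:ℚ) + s) := by
    nlinarith [mul_nonneg (by linarith : (0:ℚ) ≤ 2*α) (by linarith : (0:ℚ) ≤ S - 7/6)]
  have hub : (m i:ℚ) * d ≤ (6 + 6*s) * d := by
    nlinarith [mul_nonneg (by linarith : (0:ℚ) ≤ 6*s) (by linarith : (0:ℚ) ≤ (d:ℚ) - 1)]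
  have hfin : (m i:ℚ) ≤ 6 + 6*s := by
    have hdpos : (0:ℚ) < d := by linarith
    exact (mul_le_mul_iff_of_pos_right hdpos).mp hub
  rcases ht with h|h|h <;> subst h <;>
    (norm_num [hsdef] at hfin ⊢; exact_mod_cast hfin)
end

section
/- Let m₁ ≥ m₂ ≥ m₃ ≥ 2 be integers (or more generally r ≥ 3 entries with m₁ maximal) such that Θ := -2 + Σᵢ(1 - 1/m_i) > 0 and at most one m_i equals 2 when r = 3. Then Θ + 1/m₁ ≥ 1/6. -/
lemma aux_two (a b : ℕ) (ha : 2 ≤ a) (hb : 2 ≤ b) (h : 3 ≤ a ∨ 3 ≤ b) :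
    1 / (a : ℚ) + 1 / (b : ℚ) ≤ 5 / 6 := by
  have ha' : (1:ℚ)/a ≤ 1/2 := by
    apply one_div_le_one_div_of_le (by norm_num) (by exact_mod_cast ha)
  have hb' : (1:ℚ)/b ≤ 1/2 := by
    apply one_div_le_one_div_of_le (by norm_num) (by exact_mod_cast hb)
  rcases h with h | h
  · have : (1:ℚ)/a ≤ 1/3 := by
      apply one_div_le_one_div_of_le (by norm_num) (by exact_mod_cast h)
    linarith
  · have : (1:ℚ)/b ≤ 1/3 := by
      apply one_div_le_one_div_of_le (by norm_num) (by exact_mod_cast h)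
    linarith

/-- If `m₁,…,m_r ≥ 2` (`r ≥ 3`) with `m_{i₀}` maximal, `Θ = -2 + Σ(1-1/mᵢ) > 0`,
and at most one `mᵢ` equals `2` when `r = 3`, then `Θ + 1/m_{i₀} ≥ 1/6`. -/
theorem stmt_6 (r : ℕ) (hr : 3 ≤ r) (m : Fin r → ℕ) (hm : ∀ i, 2 ≤ m i)
    (i₀ : Fin r) (hmax : ∀ i, m i ≤ m i₀)
    (Θ : ℚ) (hΘ : Θ = -2 + ∑ i, (1 - 1 / (m i : ℚ))) (hΘpos : 0 < Θ)
    (h3 : r = 3 → ∀ i j, m i = 2 → m j = 2 → i = j) :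
    (1 : ℚ) / 6 ≤ Θ + 1 / (m i₀ : ℚ) := by
  have key : Θ + 1 / (m i₀ : ℚ) =
      (r : ℚ) - 2 - ∑ i ∈ Finset.univ.erase i₀, 1 / (m i : ℚ) := by
    rw [hΘ, Finset.sum_sub_distrib, Finset.sum_const, Finset.card_univ,
      Fintype.card_fin, nsmul_eq_mul, mul_one,
      ← Finset.add_sum_erase _ _ (Finset.mem_univ i₀)]
    ring
  rcases eq_or_lt_of_le hr with h3r | h4r
  · -- r = 3
    subst h3r
    have h3' := h3 rfl
    rw [key, Finset.sum_erase_eq_sub (Finset.mem_univ i₀), Fin.sum_univ_three]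
    fin_cases i₀
    · have h := aux_two (m 1) (m 2) (hm 1) (hm 2) (by
        by_contra hc; push_neg at hc
        have h1 : m 1 = 2 := by have := hm 1; omega
        have h2 : m 2 = 2 := by have := hm 2; omega
        exact absurd (h3' 1 2 h1 h2) (by decide))
      push_cast; linarith
    · have h := aux_two (m 0) (m 2) (hm 0) (hm 2) (by
        by_contra hc; push_neg at hc
        have h1 : m 0 = 2 := by have := hm 0; omega
        have h2 : m 2 = 2 := by have := hm 2; omega
        exact absurd (h3' 0 2 h1 h2) (by decide))
      push_cast; linarith
    · have h := aux_two (m 0) (m 1) (hm 0) (hm 1) (by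
        by_contra hc; push_neg at hc
        have h1 : m 0 = 2 := by have := hm 0; omega
        have h2 : m 1 = 2 := by have := hm 1; omega
        exact absurd (h3' 0 1 h1 h2) (by decide))
      push_cast; linarith
  · -- r ≥ 4
    have hb : ∀ i ∈ Finset.univ.erase i₀, 1 / (m i : ℚ) ≤ 1/2 := by
      intro i _
      apply one_div_le_one_div_of_le (by norm_num) (by exact_mod_cast hm i)
    have hsum := Finset.sum_le_card_nsmul _ _ _ hb
    rw [Finset.card_erase_of_mem (Finset.mem_univ i₀), Finset.card_univ,
      Fintype.card_fin, nsmul_eq_mul] at hsum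
    have hrc : (4:ℚ) ≤ r := by exact_mod_cast h4r
    have : ((r - 1 : ℕ) : ℚ) = (r:ℚ) - 1 := by
      have : 1 ≤ r := by omega
      push_cast [this]; ring
    rw [this] at hsum
    rw [key]; linarith
end
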